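/- Let $(a_n)_{n\ge 1}$ be a sequence of real numbers such that $a_{m+n} \le a_m + a_n + C\log(m) + C\log(n)$ for all $m, n \ge 1$, where $C \ge 0$ is a constant, and suppose $\sup_n a_n/n < +\infty$. Then the sequence $(a_n/n)_{n\ge 1}$ converges in $\mathbb{R} \cup \{-\infty\}$, with limit $\inf_{n\ge 1} (a_n + 2C\log(2n))/n$ when that infimum is finite. -/
import Mathlib

open Filter

namespace Stmt6Aux

/-- The corrected sequence `b n = a n + 2C log (2n)`. -/
noncomputable def b (a : ℕ → ℝ) (C : ℝ) (n : ℕ) : ℝ := a n + 2 * C * Real.log (2 * n)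

variable {a : ℕ → ℝ} {C : ℝ}

lemma b_double
    (hsub : ∀ m n : ℕ, 1 ≤ m → 1 ≤ n →
      a (m + n) ≤ a m + a n + C * Real.log m + C * Real.log n)
    {n : ℕ} (hn : 1 ≤ n) : b a C (2 * n) ≤ 2 * b a C n := by
  have hn0 : (0:ℝ) < n := by exact_mod_cast hn
  have h := hsub n n hn hn
  rw [← two_mul] at h
  have key : Real.log (2 * ((2 * n : ℕ) : ℝ)) + Real.log (n : ℝ)
      = 2 * Real.log (2 * (n : ℝ)) := by
    push_cast
    rw [show (2:ℝ) * (2 * (n:ℝ)) = (2 * (n:ℝ)) * 2 by ring,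
        Real.log_mul (by positivity) two_ne_zero,
        Real.log_mul two_ne_zero hn0.ne']
    ring
  have k2 : 2 * C * Real.log (2 * ((2 * n : ℕ) : ℝ)) + 2 * C * Real.log (n : ℝ)
      = 4 * C * Real.log (2 * (n : ℝ)) := by linear_combination 2 * C * key
  unfold b
  linarith

lemma b_pow
    (hsub : ∀ m n : ℕ, 1 ≤ m → 1 ≤ n →
      a (m + n) ≤ a m + a n + C * Real.log m + C * Real.log n)
    {n : ℕ} (hn : 1 ≤ n) :
    ∀ k : ℕ, b a C (2 ^ k * n) ≤ (2:ℝ) ^ k * b a C n := by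
  intro k
  induction k with
  | zero => simp
  | succ k ih =>
    have h1 : 1 ≤ 2 ^ k * n := Nat.one_le_iff_ne_zero.2 (by positivity)
    have h2 := b_double hsub h1
    calc b a C (2 ^ (k+1) * n) = b a C (2 * (2 ^ k * n)) := by congr 1; ring
      _ ≤ 2 * b a C (2 ^ k * n) := h2
      _ ≤ 2 * ((2:ℝ) ^ k * b a C n) := by linarith
      _ = (2:ℝ) ^ (k+1) * b a C n := by ring

lemma key (hC : 0 ≤ C)
    (hsub : ∀ m n : ℕ, 1 ≤ m → 1 ≤ n →
      a (m + n) ≤ a m + a n + C * Real.log m + C * Real.log n)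
    {n : ℕ} (hn : 1 ≤ n) :
    ∃ D E : ℝ, 0 ≤ D ∧ 0 ≤ E ∧ ∀ m : ℕ, 1 ≤ m →
      a m ≤ ((m : ℝ) / n) * b a C n + D + E * Real.log (2 * m) ^ 2 := by
  have hne : (Finset.Icc 1 (2*n)).Nonempty := ⟨1, by simp; omega⟩
  set D0 : ℝ := (Finset.Icc 1 (2*n)).sup' hne a with hD0
  refine ⟨max D0 0 + 2 * |b a C n|, 2 * C / Real.log 2,
    by positivity, by positivity, ?_⟩
  have hn0 : (0:ℝ) < n := by exact_mod_cast hn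
  set E : ℝ := 2 * C / Real.log 2 with hE
  have hE0 : 0 ≤ E := by positivity
  have hElog2 : E * Real.log 2 = 2 * C := by
    rw [hE, div_mul_cancel₀]
    exact Real.log_ne_zero_of_pos_of_ne_one (by norm_num) (by norm_num)
  intro m
  induction m using Nat.strong_induction_on with
  | _ m IH =>
  intro hm
  have hm0 : (0:ℝ) < m := by exact_mod_cast hm
  by_cases hsmall : m ≤ 2 * n
  · have h1 : a m ≤ max D0 0 :=
      le_max_of_le_left (Finset.le_sup' a (by simp; omega))
    have hmn : (m:ℝ)/n ≤ 2 := by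
      rw [div_le_iff₀ hn0]; exact_mod_cast hsmall
    have hmn0 : 0 ≤ (m:ℝ)/n := by positivity
    have h2 : -(2 * |b a C n|) ≤ ((m : ℝ)/n) * b a C n := by
      nlinarith [neg_abs_le (b a C n), abs_nonneg (b a C n)]
    nlinarith [sq_nonneg (Real.log (2*(m:ℝ))), mul_nonneg hE0 (sq_nonneg (Real.log (2*(m:ℝ))))]
  · push_neg at hsmall
    have h2nm : 2 * n ≤ m := le_of_lt hsmall
    set k := Nat.log 2 (m / n) with hk
    have hdiv2 : 2 ≤ m / n := (Nat.le_div_iff_mul_le (by omega)).2 (by omega)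
    have hpm : 2 ^ k * n ≤ m := by
      calc 2 ^ k * n ≤ (m / n) * n :=
            Nat.mul_le_mul_right n (Nat.pow_log_le_self 2 (by omega))
        _ ≤ m := Nat.div_mul_le_self m n
    have hmp : m < 2 ^ (k+1) * n :=
      (Nat.div_lt_iff_lt_mul (by omega)).1 (Nat.lt_pow_succ_log_self (by norm_num) (m / n))
    set p := 2 ^ k * n with hp
    have hp1 : 1 ≤ p := Nat.one_le_iff_ne_zero.2 (by positivity)
    have h2p : 2 ^ (k+1) * n = 2 * p := by rw [hp, pow_succ]; ring
    have hm2p : m < 2 * p := by omega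
    set r := m - p with hr
    have hpr : p + r = m := by omega
    have hrm : r < m := by omega
    have hrp : r < p := by omega
    have hcast_p : (p:ℝ) = 2 ^ k * (n:ℝ) := by rw [hp]; push_cast; ring
    have hpn : (p:ℝ)/n = 2 ^ k := by rw [hcast_p]; field_simp
    have hbp := b_pow hsub hn k
    rw [← hp] at hbp
    have hp0 : (0:ℝ) < p := by exact_mod_cast hp1
    have hp1' : (1:ℝ) ≤ p := by exact_mod_cast hp1
    have hm1' : (1:ℝ) ≤ m := by exact_mod_cast hm
    have hap : a p ≤ (2:ℝ) ^ k * b a C n := by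
      have hlog : 0 ≤ Real.log (2 * (p:ℝ)) :=
        Real.log_nonneg (by linarith)
      have : a p ≤ b a C p := by
        unfold b; nlinarith
      linarith
    by_cases hr1 : 1 ≤ r
    · have hIH := IH r hrm hr1
      have hsub' := hsub p r hp1 hr1
      rw [hpr] at hsub'
      have hr0 : (0:ℝ) < r := by exact_mod_cast hr1
      have hr1' : (1:ℝ) ≤ r := by exact_mod_cast hr1
      have hplem : (p:ℝ) ≤ m := by exact_mod_cast hpm
      have hrlem : (r:ℝ) ≤ m := by exact_mod_cast (le_of_lt hrm)
      have hlogp : Real.log (p:ℝ) ≤ Real.log (m:ℝ) :=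
        Real.log_le_log hp0 hplem
      have hlogr : Real.log (r:ℝ) ≤ Real.log (m:ℝ) :=
        Real.log_le_log hr0 hrlem
      have h5 : C * Real.log (p:ℝ) ≤ C * Real.log (m:ℝ) :=
        mul_le_mul_of_nonneg_left hlogp hC
      have h6 : C * Real.log (r:ℝ) ≤ C * Real.log (m:ℝ) :=
        mul_le_mul_of_nonneg_left hlogr hC
      have h2rm : (2:ℝ) * r ≤ m := by
        have : 2 * r ≤ m := by omega
        exact_mod_cast this
      have hlog2r0 : 0 ≤ Real.log (2 * (r:ℝ)) :=
        Real.log_nonneg (by linarith)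
      have hlog2rm : Real.log (2 * (r:ℝ)) ≤ Real.log (m:ℝ) :=
        Real.log_le_log (by positivity) h2rm
      have h9 : Real.log (2 * (r:ℝ)) ^ 2 ≤ Real.log (m:ℝ) ^ 2 :=
        pow_le_pow_left₀ hlog2r0 hlog2rm 2
      have h9' : E * Real.log (2 * (r:ℝ)) ^ 2 ≤ E * Real.log (m:ℝ) ^ 2 :=
        mul_le_mul_of_nonneg_left h9 hE0
      have hlogm0 : 0 ≤ Real.log (m:ℝ) := Real.log_nonneg hm1'
      have h7 : Real.log (2 * (m:ℝ)) = Real.log 2 + Real.log (m:ℝ) :=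
        Real.log_mul two_ne_zero hm0.ne'
      have h4 : ((m:ℝ)/n) * b a C n
          = (2:ℝ) ^ k * b a C n + ((r:ℝ)/n) * b a C n := by
        have hmcast : (m:ℝ) = (p:ℝ) + (r:ℝ) := by exact_mod_cast hpr.symm
        rw [hmcast, ← hpn]; ring
      rw [h4, h7]
      have hClogm : 0 ≤ C * Real.log (m:ℝ) := mul_nonneg hC hlogm0
      have hq : E * (Real.log 2 + Real.log (m:ℝ)) ^ 2
          = E * (Real.log 2) ^ 2 + 2 * (2 * C) * Real.log (m:ℝ)
            + E * Real.log (m:ℝ) ^ 2 := by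
        have h0 : E * (Real.log 2 + Real.log (m:ℝ)) ^ 2
            = E * (Real.log 2) ^ 2 + 2 * (E * Real.log 2) * Real.log (m:ℝ)
              + E * Real.log (m:ℝ) ^ 2 := by ring
        rw [h0, hElog2]
      linarith [mul_nonneg hE0 (sq_nonneg (Real.log 2)), hq, h9', hClogm,
        hsub', hap, hIH, h5, h6]
    · have hr0 : r = 0 := by omega
      have hmeqp : m = p := by omega
      rw [hmeqp, hpn]
      have hsq : 0 ≤ E * Real.log (2 * (p:ℝ)) ^ 2 :=
        mul_nonneg hE0 (sq_nonneg _)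
      have hDpos : 0 ≤ max D0 0 + 2 * |b a C n| := by positivity
      linarith [hap]

lemma sq_log_div_tendsto :
    Tendsto (fun m : ℕ => Real.log (2 * (m:ℝ)) ^ 2 / m) atTop (nhds 0) := by
  have h := Real.tendsto_pow_log_div_mul_add_atTop 1 0 2 one_ne_zero
  simp only [one_mul, add_zero] at h
  have h2 : Tendsto (fun m : ℕ => (2 * (m:ℝ))) atTop atTop :=
    (tendsto_natCast_atTop_atTop).const_mul_atTop two_pos
  have h3 := (h.comp h2).const_mul (2:ℝ)
  rw [mul_zero] at h3
  have heq : (fun m : ℕ => Real.log (2 * (m:ℝ)) ^ 2 / m)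
      = fun m : ℕ => 2 * (Real.log (2 * (m:ℝ)) ^ 2 / (2 * (m:ℝ))) := by
    funext m
    rw [← mul_div_assoc, mul_div_mul_left _ _ (two_ne_zero)]
  rw [heq]
  exact h3

lemma log_div_tendsto (c : ℝ) :
    Tendsto (fun m : ℕ => c * Real.log (2 * (m:ℝ)) / m) atTop (nhds 0) := by
  have h := Real.tendsto_pow_log_div_mul_add_atTop 1 0 1 one_ne_zero
  simp only [one_mul, add_zero, pow_one] at h
  have h2 : Tendsto (fun m : ℕ => (2 * (m:ℝ))) atTop atTop :=
    (tendsto_natCast_atTop_atTop).const_mul_atTop two_pos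
  have h3 := (h.comp h2).const_mul (2 * c)
  rw [mul_zero] at h3
  have heq : (fun m : ℕ => c * Real.log (2 * (m:ℝ)) / m)
      = fun m : ℕ => (2 * c) * (Real.log (2 * (m:ℝ)) / (2 * (m:ℝ))) := by
    funext m
    rw [← mul_div_assoc]
    rw [show (2 * c) * Real.log (2 * (m:ℝ)) = 2 * (c * Real.log (2 * (m:ℝ))) by ring]
    rw [mul_div_mul_left _ _ (two_ne_zero)]
  rw [heq]
  exact h3

lemma err_tendsto (D E : ℝ) :
    Tendsto (fun m : ℕ => (D + E * Real.log (2 * (m:ℝ)) ^ 2) / m) atTop (nhds 0) := by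
  have h1 := tendsto_const_div_atTop_nhds_zero_nat D
  have h2 := sq_log_div_tendsto.const_mul E
  rw [mul_zero] at h2
  have h := h1.add h2
  rw [add_zero] at h
  refine h.congr (fun m => ?_)
  rw [add_div, mul_div_assoc]

end Stmt6Aux

/-- Fekete's lemma with logarithmic error terms: if
`a (m+n) ≤ a m + a n + C log m + C log n` for all `m, n ≥ 1` with `C ≥ 0`, and
`sup_n a n / n < +∞`, then `(a n / n)` converges in `ℝ ∪ {-∞}`, with limit
`inf_{n ≥ 1} (a n + 2C log (2n)) / n` when that infimum is finite. -/
theorem stmt6 (a : ℕ → ℝ) (C : ℝ) (hC : 0 ≤ C)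
    (hsub : ∀ m n : ℕ, 1 ≤ m → 1 ≤ n →
      a (m + n) ≤ a m + a n + C * Real.log m + C * Real.log n)
    (hbd : ∃ M : ℝ, ∀ n : ℕ, 1 ≤ n → a n / n ≤ M) :
    ∃ L : EReal,
      Tendsto (fun n : ℕ => ((a n / n : ℝ) : EReal)) atTop (nhds L) ∧
      (BddBelow {x : ℝ | ∃ n : ℕ, 1 ≤ n ∧ x = (a n + 2 * C * Real.log (2 * n)) / n} →
        L = ((sInf {x : ℝ | ∃ n : ℕ, 1 ≤ n ∧
          x = (a n + 2 * C * Real.log (2 * n)) / n} : ℝ) : EReal)) := by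
  classical
  set S : Set ℝ := {x : ℝ | ∃ n : ℕ, 1 ≤ n ∧ x = (a n + 2 * C * Real.log (2 * n)) / n}
    with hSdef
  have hSne : S.Nonempty := ⟨_, 1, le_refl 1, rfl⟩
  have hupper : ∀ c : ℝ, (∃ n : ℕ, 1 ≤ n ∧ Stmt6Aux.b a C n / n < c) →
      ∀ᶠ m : ℕ in atTop, a m / m < c := by
    rintro c ⟨n, hn, hbc⟩
    obtain ⟨D, E, hD, hE, hkey⟩ := Stmt6Aux.key hC hsub hn
    have hn0 : (0:ℝ) < n := by exact_mod_cast hn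
    have herr := Stmt6Aux.err_tendsto D E
    have hev : ∀ᶠ m : ℕ in atTop,
        (D + E * Real.log (2 * (m:ℝ)) ^ 2) / m < c - Stmt6Aux.b a C n / n :=
      herr.eventually_lt_const (by linarith)
    filter_upwards [hev, eventually_ge_atTop 1] with m hm1 hm2
    have hm0 : (0:ℝ) < m := by exact_mod_cast hm2
    have h1 := hkey m hm2
    have h2 : a m / m ≤ (((m:ℝ)/n) * Stmt6Aux.b a C n + D
        + E * Real.log (2 * (m:ℝ)) ^ 2) / m := (div_le_div_iff_of_pos_right hm0).2 h1
    have h3 : (((m:ℝ)/n) * Stmt6Aux.b a C n + D + E * Real.log (2 * (m:ℝ)) ^ 2) / m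
        = Stmt6Aux.b a C n / n + (D + E * Real.log (2 * (m:ℝ)) ^ 2) / m := by
      field_simp
      ring
    rw [h3] at h2
    linarith
  by_cases hbb : BddBelow S
  · set I := sInf S with hI
    refine ⟨(I : EReal), ?_, fun _ => rfl⟩
    rw [EReal.tendsto_coe]
    rw [tendsto_order]
    constructor
    · intro c hc
      have hlog := Stmt6Aux.log_div_tendsto (2 * C)
      have h1 : ∀ᶠ m : ℕ in atTop, 2 * C * Real.log (2 * (m:ℝ)) / m < I - c :=
        hlog.eventually_lt_const (by linarith)
      filter_upwards [h1, eventually_ge_atTop 1] with m hm1 hm2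
      have hm0 : (0:ℝ) < m := by exact_mod_cast hm2
      have hIle : I ≤ (a m + 2 * C * Real.log (2 * (m:ℝ))) / m :=
        csInf_le hbb ⟨m, hm2, rfl⟩
      have hsplit : (a m + 2 * C * Real.log (2 * (m:ℝ))) / m
          = a m / m + 2 * C * Real.log (2 * (m:ℝ)) / m := add_div _ _ _
      rw [hsplit] at hIle
      linarith
    · intro c hc
      obtain ⟨x, ⟨n, hn, rfl⟩, hxc⟩ := exists_lt_of_csInf_lt hSne hc
      exact hupper c ⟨n, hn, hxc⟩
  · refine ⟨⊥, ?_, fun h => absurd h hbb⟩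
    rw [EReal.tendsto_nhds_bot_iff_real]
    intro x
    obtain ⟨y, ⟨n, hn, rfl⟩, hyx⟩ := not_bddBelow_iff.1 hbb x
    exact (hupper x ⟨n, hn, hyx⟩).mono (fun m h => by exact_mod_cast h)
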